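/- Let M be a d×d doubly stochastic Markov matrix (all entries nonnegative, all row sums and all column sums equal to 1). If M = exp(Q) for some d×d Markov generator Q, then Q is doubly stochastic as well, i.e., every column of Q also sums to 0. Hence a doubly stochastic Markov matrix is embeddable if and only if it can be embedded with a doubly stochastic generator. -/

import Mathlib

open scoped Matrix
open NormedSpace Matrix

attribute [local instance] Matrix.linftyOpNormedRing Matrix.linftyOpNormedAlgebra

namespace DSEmbed

variable {d : ℕ}

/-- scalar version of `g` -/
noncomputable def gc (μ : ℂ) : ℂ := ∑' n : ℕ, ((n + 1).factorial : ℂ)⁻¹ * μ ^ n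

/-- matrix version of `g`. -/
noncomputable def gM (A : Matrix (Fin d) (Fin d) ℂ) : Matrix (Fin d) (Fin d) ℂ :=
  ∑' n : ℕ, ((n + 1).factorial : ℂ)⁻¹ • A ^ n

lemma summable_gM (A : Matrix (Fin d) (Fin d) ℂ) :
    Summable fun n : ℕ => ((n + 1).factorial : ℂ)⁻¹ • A ^ n := by
  refine Summable.of_norm_bounded (NormedSpace.expSeries_summable' (𝕂 := ℂ) A).norm ?_
  intro n
  simp only [norm_smul]
  gcongr
  simp only [norm_inv, Complex.norm_natCast]
  have h1 : (n.factorial : ℝ) ≤ ((n+1).factorial : ℝ) := by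
    exact_mod_cast Nat.factorial_le (Nat.le_succ n)
  have h2 : (0:ℝ) < n.factorial := by exact_mod_cast Nat.factorial_pos n
  exact inv_anti₀ h2 h1

lemma summable_gM_succ (A : Matrix (Fin d) (Fin d) ℂ) :
    Summable fun n : ℕ => ((n + 1).factorial : ℂ)⁻¹ • A ^ (n + 1) := by
  have := ((NormedSpace.expSeries_summable' (𝕂 := ℂ) A).comp_injective
    (add_left_injective 1))
  exact this

lemma exp_sub_one (A : Matrix (Fin d) (Fin d) ℂ) :
    NormedSpace.exp A - 1 = ∑' n : ℕ, ((n + 1).factorial : ℂ)⁻¹ • A ^ (n + 1) := by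
  have h := NormedSpace.exp_eq_tsum (𝕂 := ℂ) (𝔸 := Matrix (Fin d) (Fin d) ℂ)
  have h2 : NormedSpace.exp A = ∑' n : ℕ, ((n).factorial : ℂ)⁻¹ • A ^ n := by
    rw [h]
  rw [h2, Summable.tsum_eq_zero_add ?_]
  simp [add_sub_cancel_left]
  exact NormedSpace.expSeries_summable' (𝕂 := ℂ) A

lemma mul_gM (A : Matrix (Fin d) (Fin d) ℂ) :
    A * gM A = NormedSpace.exp A - 1 := by
  rw [exp_sub_one, gM, ← (summable_gM A).tsum_mul_left A]
  congr 1; funext n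
  rw [mul_smul_comm, ← pow_succ']

lemma gM_mul (A : Matrix (Fin d) (Fin d) ℂ) :
    gM A * A = NormedSpace.exp A - 1 := by
  rw [exp_sub_one, gM, ← (summable_gM A).tsum_mul_right A]
  congr 1; funext n
  rw [smul_mul_assoc, ← pow_succ]

lemma summable_gc (μ : ℂ) :
    Summable fun n : ℕ => ((n + 1).factorial : ℂ)⁻¹ * μ ^ n := by
  have := summable_gM (d := 1) (Matrix.diagonal (fun _ => μ))
  refine Summable.of_norm_bounded ((NormedSpace.expSeries_summable' (𝕂 := ℂ) μ).norm) ?_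
  intro n
  simp only [norm_mul, smul_eq_mul, norm_inv, Complex.norm_natCast]
  gcongr
  exact Nat.le_succ n

lemma gc_zero : gc 0 = 1 := by
  rw [gc, tsum_eq_single 0 (by intro n hn; simp [zero_pow hn])]
  simp

lemma mul_gc (μ : ℂ) : μ * gc μ = Complex.exp μ - 1 := by
  have h2 : Complex.exp μ = ∑' n : ℕ, ((n).factorial : ℂ)⁻¹ * μ ^ n := by
    rw [Complex.exp_eq_exp_ℂ, NormedSpace.exp_eq_tsum (𝕂 := ℂ)]
    simp [smul_eq_mul]
  rw [h2, Summable.tsum_eq_zero_add (by simpa [smul_eq_mul] using NormedSpace.expSeries_summable' (𝕂 := ℂ) μ)]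
  rw [gc, ← (summable_gc μ).tsum_mul_left μ]
  simp only [pow_zero, Nat.factorial_zero, Nat.cast_one, inv_one, mul_one, add_sub_cancel_left]
  congr 1; funext n; ring

lemma exp_of_gc_eq_zero {μ : ℂ} (h : gc μ = 0) : Complex.exp μ = 1 := by
  have := mul_gc μ
  rw [h, mul_zero] at this
  linear_combination -this

lemma pow_mulVec_eigen {A : Matrix (Fin d) (Fin d) ℂ} {μ : ℂ} {w : Fin d → ℂ}
    (hw : A *ᵥ w = μ • w) (n : ℕ) : A ^ n *ᵥ w = μ ^ n • w := by
  induction n with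
  | zero => simp [Matrix.one_mulVec]
  | succ n ih =>
    rw [pow_succ, ← Matrix.mulVec_mulVec, hw, Matrix.mulVec_smul, ih, smul_smul, pow_succ]; ring_nf

lemma gM_mulVec_eigen {A : Matrix (Fin d) (Fin d) ℂ} {μ : ℂ} {w : Fin d → ℂ}
    (hw : A *ᵥ w = μ • w) : gM A *ᵥ w = gc μ • w := by
  classical
  let L : Matrix (Fin d) (Fin d) ℂ →ₗ[ℂ] (Fin d → ℂ) :=
    { toFun := fun B => B *ᵥ w
      map_add' := fun B C => Matrix.add_mulVec B C w
      map_smul' := fun c B => Matrix.smul_mulVec c B w }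
  have hL : gM A *ᵥ w = L.toContinuousLinearMap (gM A) := rfl
  rw [hL, gM, (L.toContinuousLinearMap).map_tsum (summable_gM A)]
  have hterm : ∀ n : ℕ, L.toContinuousLinearMap (((n + 1).factorial : ℂ)⁻¹ • A ^ n)
      = (((n + 1).factorial : ℂ)⁻¹ * μ ^ n) • w := by
    intro n
    show (((n + 1).factorial : ℂ)⁻¹ • A ^ n) *ᵥ w = _
    rw [Matrix.smul_mulVec, pow_mulVec_eigen hw, smul_smul]
  simp only [hterm]
  let S : ℂ →ₗ[ℂ] (Fin d → ℂ) :=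
    { toFun := fun c => c • w
      map_add' := fun a b => add_smul a b w
      map_smul' := fun a b => (smul_smul a b w).symm.trans rfl }
  have hS : ∀ c : ℂ, c • w = S.toContinuousLinearMap c := fun _ => rfl
  simp only [hS]
  rw [← (S.toContinuousLinearMap).map_tsum (summable_gc μ)]
  rfl

lemma det_gM_ne_zero {A : Matrix (Fin d) (Fin d) ℂ}
    (hspec : ∀ μ : ℂ, Module.End.HasEigenvalue (Matrix.toLin' A) μ →
      Complex.exp μ = 1 → μ = 0) : (gM A).det ≠ 0 := by
  classical
  intro hdet
  obtain ⟨v, hv0, hv⟩ := (Matrix.exists_mulVec_eq_zero_iff).2 hdet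
  set K : Submodule ℂ (Fin d → ℂ) := LinearMap.ker (gM A).mulVecLin with hK
  have hvK : v ∈ K := by simpa [hK, Matrix.mulVecLin_apply] using hv
  have hcomm : gM A * A = A * gM A := by rw [gM_mul, mul_gM]
  have hinv : ∀ x ∈ K, A.mulVecLin x ∈ K := by
    intro x hx
    simp only [hK, LinearMap.mem_ker, Matrix.mulVecLin_apply] at hx ⊢
    rw [Matrix.mulVec_mulVec, hcomm, ← Matrix.mulVec_mulVec, hx, Matrix.mulVec_zero]
  have : Nontrivial K := by
    refine ⟨⟨v, hvK⟩, 0, ?_⟩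
    simp [Subtype.ext_iff, hv0]
  obtain ⟨μ, hμ⟩ := Module.End.exists_eigenvalue (A.mulVecLin.restrict hinv)
  obtain ⟨w, hw, hw0⟩ := hμ.exists_hasEigenvector
  have hweq : A *ᵥ (w : Fin d → ℂ) = μ • (w : Fin d → ℂ) := by
    have h1 := congrArg (Subtype.val) (Module.End.mem_eigenspace_iff.1 hw)
    rw [LinearMap.restrict_coe_apply] at h1
    rw [← Matrix.mulVecLin_apply]
    exact h1
  have hwne : (w : Fin d → ℂ) ≠ 0 := fun h => hw0 (Subtype.ext h)
  have hgw : gM A *ᵥ (w : Fin d → ℂ) = 0 := by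
    have h2 : (gM A).mulVecLin (w : Fin d → ℂ) = 0 := LinearMap.mem_ker.1 w.2
    rwa [Matrix.mulVecLin_apply] at h2
  have hgc : gc μ = 0 := by
    have h1 := gM_mulVec_eigen hweq
    rw [hgw] at h1
    rcases smul_eq_zero.1 h1.symm with h | h
    · exact h
    · exact absurd h hwne
  have hμ0 : μ ≠ 0 := fun h => by simp [h, gc_zero] at hgc
  have heig : Module.End.HasEigenvalue (Matrix.toLin' A) μ := by
    refine Module.End.hasEigenvalue_of_hasEigenvector
      (x := (w : Fin d → ℂ)) ⟨Module.End.mem_eigenspace_iff.2 ?_, hwne⟩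
    rw [Matrix.toLin'_apply]; exact hweq
  exact hμ0 (hspec μ heig (exp_of_gc_eq_zero hgc))

end DSEmbed

/-- A Markov matrix: nonnegative entries, each row sums to 1. -/
def IsMarkov {d : ℕ} (M : Matrix (Fin d) (Fin d) ℝ) : Prop :=
  (∀ i j, 0 ≤ M i j) ∧ ∀ i, ∑ j, M i j = 1

/-- A Markov generator (rate matrix): nonnegative off-diagonal entries,
each row sums to 0. -/
def IsGenerator {d : ℕ} (Q : Matrix (Fin d) (Fin d) ℝ) : Prop :=
  (∀ i j, i ≠ j → 0 ≤ Q i j) ∧ ∀ i, ∑ j, Q i j = 0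

theorem doubly_stochastic_embedding (d : ℕ) (M : Matrix (Fin d) (Fin d) ℝ)
    (hM : IsMarkov M) (hcol : ∀ j, ∑ i, M i j = 1) :
    (∀ Q : Matrix (Fin d) (Fin d) ℝ, IsGenerator Q →
      NormedSpace.exp Q = M → ∀ j, ∑ i, Q i j = 0) ∧
    ((∃ Q : Matrix (Fin d) (Fin d) ℝ, IsGenerator Q ∧ NormedSpace.exp Q = M) ↔
      (∃ Q : Matrix (Fin d) (Fin d) ℝ, IsGenerator Q ∧ (∀ j, ∑ i, Q i j = 0) ∧
        NormedSpace.exp Q = M)) := by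
  have main : ∀ Q : Matrix (Fin d) (Fin d) ℝ, IsGenerator Q →
      NormedSpace.exp Q = M → ∀ j, ∑ i, Q i j = 0 := by
    intro Q hQ hexp j
    classical
    set A : Matrix (Fin d) (Fin d) ℂ := Q.map (algebraMap ℝ ℂ) with hA
    have hmapexp : NormedSpace.exp A = M.map (algebraMap ℝ ℂ) := by
      have hcont : Continuous ((algebraMap ℝ ℂ).mapMatrix :
          Matrix (Fin d) (Fin d) ℝ →+* Matrix (Fin d) (Fin d) ℂ) := by
        exact Continuous.matrix_map continuous_id (continuous_algebraMap ℝ ℂ)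
      have h1 := NormedSpace.map_exp ((algebraMap ℝ ℂ).mapMatrix) hcont Q
      erw [hexp] at h1
      have h2 : NormedSpace.exp A = NormedSpace.exp A := by
        rfl
      rw [← h2]
      rw [RingHom.mapMatrix_apply, RingHom.mapMatrix_apply] at h1
      rw [← hA] at h1
      exact h1.symm
    have hspec : ∀ μ : ℂ, Module.End.HasEigenvalue (Matrix.toLin' A) μ →
        Complex.exp μ = 1 → μ = 0 := by
      intro μ hμ hexpμ
      obtain ⟨k, hk⟩ := eigenvalue_mem_ball hμ
      rw [Metric.mem_closedBall] at hk
      have hsum : (∑ j ∈ Finset.univ.erase k, ‖A k j‖) = - Q k k := by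
        have he : ∀ j ∈ Finset.univ.erase k, ‖A k j‖ = Q k j := by
          intro j hj
          have hj' : j ≠ k := Finset.ne_of_mem_erase hj
          have h3 : ‖A k j‖ = |Q k j| := by
            simp [hA, Matrix.map_apply, Complex.norm_real]
          rw [h3, abs_of_nonneg (hQ.1 k j (Ne.symm hj'))]
        rw [Finset.sum_congr rfl he,
          Finset.sum_erase_eq_sub (Finset.mem_univ k), hQ.2 k]
        ring
      rw [hsum] at hk
      have hAkk : A k k = ((Q k k : ℝ) : ℂ) := rfl
      rw [hAkk, Complex.dist_eq] at hk
      have hre : μ.re = 0 := by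
        have habs := congrArg (‖·‖) hexpμ
        rw [Complex.norm_exp] at habs
        norm_num at habs
        exact habs
      have hsq : ‖μ - (Q k k : ℂ)‖ ^ 2 ≤ (- Q k k) ^ 2 := by
        have h0 : (0:ℝ) ≤ ‖μ - (Q k k : ℂ)‖ := norm_nonneg _
        nlinarith
      rw [Complex.sq_norm, Complex.normSq_apply] at hsq
      have hre2 : (μ - (Q k k : ℂ)).re = - Q k k := by
        simp [Complex.sub_re, hre]
      have him2 : (μ - (Q k k : ℂ)).im = μ.im := by simp [Complex.sub_im]
      rw [hre2, him2] at hsq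
      have him : μ.im = 0 := by nlinarith
      exact Complex.ext hre him
    set u : Fin d → ℂ := fun _ => 1 with hu
    have huM : u ᵥ* (M.map (algebraMap ℝ ℂ)) = u := by
      funext i
      simp only [Matrix.vecMul, dotProduct, hu, Matrix.map_apply, one_mul,
        Complex.coe_algebraMap]
      exact_mod_cast hcol i
    have hkey : (u ᵥ* A) ᵥ* DSEmbed.gM A = 0 := by
      rw [Matrix.vecMul_vecMul, DSEmbed.mul_gM, Matrix.vecMul_sub, Matrix.vecMul_one,
        hmapexp, huM, sub_self]
    have h0 : u ᵥ* A = 0 := Matrix.eq_zero_of_vecMul_eq_zero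
      (DSEmbed.det_gM_ne_zero hspec) hkey
    have h5 := congrFun h0 j
    simp only [Matrix.vecMul, dotProduct, hu, hA, Matrix.map_apply, one_mul,
      Pi.zero_apply, Complex.coe_algebraMap] at h5
    exact_mod_cast h5
  exact ⟨main, ⟨fun ⟨Q, hQ, he⟩ => ⟨Q, hQ, main Q hQ he, he⟩,
    fun ⟨Q, hQ, _, he⟩ => ⟨Q, hQ, he⟩⟩⟩
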